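/- Let G be a finite group in which every normal 3-subgroup is trivial (O_3(G) = 1), and let x ∈ G be an element of order 3 that normalizes no nontrivial 2-subgroup of G (i.e., for every subgroup P of G that is a 2-group, if x normalizes P then P is trivial). If N is a normal subgroup of G whose order is prime to 3, then the order of N is prime to 6 (equivalently, N has odd order). -/

import Mathlib

open Pointwise

/-- Let `G` be a finite group with `O_3(G) = 1` (every normal 3-subgroup is trivial),
and let `x ∈ G` have order 3 and normalize no nontrivial 2-subgroup of `G`.
Then every normal subgroup of `G` of order prime to 3 has order prime to 6. -/
theorem normal_subgroup_coprime_six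
    {G : Type*} [Group G] [Finite G]
    (hO3 : ∀ P : Subgroup G, P.Normal → IsPGroup 3 P → P = ⊥)
    (x : G) (hx : orderOf x = 3)
    (hnorm : ∀ P : Subgroup G, IsPGroup 2 P → x ∈ Subgroup.normalizer (P : Set G) → P = ⊥)
    (N : Subgroup G) (hN : N.Normal) (hN3 : Nat.Coprime (Nat.card N) 3) :
    Nat.Coprime (Nat.card N) 6 := by
  have h2 : Nat.Coprime (Nat.card N) 2 := by
    -- the cyclic group generated by x
    set H := Subgroup.zpowers x with hH
    have hHcard : Nat.card H = 3 ^ 1 := by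
      simp [hH, Nat.card_zpowers, hx]
    have hH3 : IsPGroup 3 H := IsPGroup.of_card hHcard
    -- H acts on the Sylow 2-subgroups of N
    letI : MulAction H (Sylow 2 N) :=
      MulAction.compHom _ ((MulAut.conjNormal (H := N)).comp H.subtype)
    have h3 : Fact (Nat.Prime 3) := ⟨by norm_num⟩
    have hcard : ¬ (3 ∣ Nat.card (Sylow 2 N)) := by
      intro hdvd
      obtain ⟨P⟩ : Nonempty (Sylow 2 N) := inferInstance
      have h1 : Nat.card (Sylow 2 N) ∣ (P : Subgroup N).index :=
        Sylow.card_dvd_index P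
      have h2 : (P : Subgroup N).index ∣ Nat.card N := Subgroup.index_dvd_card _
      have : (3 : ℕ) ∣ Nat.card N := hdvd.trans (h1.trans h2)
      have := (Nat.Prime.coprime_iff_not_dvd (by norm_num)).mp hN3.symm
      exact this ‹_›
    obtain ⟨P, hP⟩ := hH3.nonempty_fixed_point_of_prime_not_dvd_card (Sylow 2 N) hcard
    have hPfix : (⟨x, Subgroup.mem_zpowers x⟩ : H) • P = P := hP ⟨x, Subgroup.mem_zpowers x⟩
    -- hence x normalizes the image of P in G
    have hsmul : (MulAut.conjNormal x : MulAut N) • P = P := hPfix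
    have hsub : (MulAut.conjNormal x : MulAut N) • (P : Subgroup N) = P := by
      rw [← Sylow.pointwise_smul_def, hsmul]
    have hxnorm : x ∈ Subgroup.normalizer (((P : Subgroup N).map N.subtype : Subgroup G) : Set G) := by
      rw [Subgroup.mem_normalizer_iff]
      intro h
      simp only [Subgroup.mem_map]
      constructor
      · rintro ⟨n, hn, rfl⟩
        refine ⟨MulAut.conjNormal x n, ?_, ?_⟩
        · rw [← hsub]; exact Subgroup.smul_mem_pointwise_smul _ _ _ hn
        · simp [MulAut.conjNormal_apply]
      · rintro ⟨n, hn, hne⟩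
        refine ⟨(MulAut.conjNormal x)⁻¹ n, ?_, ?_⟩
        · rw [← hsub] at hn
          exact (Subgroup.mem_pointwise_smul_iff_inv_smul_mem.mp hn)
        · show (((MulAut.conjNormal x)⁻¹ n : N) : G) = h
          rw [MulAut.conjNormal_inv_apply x n]
          have hne' : (n : G) = x * h * x⁻¹ := hne
          rw [hne']; group
    have hP2 : IsPGroup 2 ((P : Subgroup N).map N.subtype) :=
      (P.isPGroup').map _
    have hPbot : (P : Subgroup N).map N.subtype = ⊥ := hnorm _ hP2 hxnorm
    have hPbot' : (P : Subgroup N) = ⊥ := by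
      rwa [Subgroup.map_eq_bot_iff_of_injective _ N.subtype_injective] at hPbot
    have hcardP : Nat.card (P : Subgroup N) = 2 ^ (Nat.card N).factorization 2 :=
      P.card_eq_multiplicity
    rw [hPbot'] at hcardP
    simp only [Subgroup.card_bot] at hcardP
    have hfact : (Nat.card N).factorization 2 = 0 := by
      by_contra hne
      have := Nat.one_lt_two_pow (n := (Nat.card N).factorization 2) hne
      omega
    have hNpos : Nat.card N ≠ 0 := Nat.card_pos.ne'
    have : ¬ (2 ∣ Nat.card N) := by
      rw [Nat.factorization_eq_zero_iff] at hfact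
      rcases hfact with h | h | h
      · exact absurd h (by norm_num)
      · exact h
      · exact absurd h hNpos
    exact ((Nat.Prime.coprime_iff_not_dvd (by norm_num)).mpr this).symm
  have : (6 : ℕ) = 2 * 3 := by norm_num
  rw [this]
  exact Nat.Coprime.mul_right h2 hN3
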